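/- For every k ≥ 1 one has S₂(k) ≤ k + ⌊log₂(k + 1 + ⌊log₂(k+1)⌋)⌋ ≤ k + 1 + ⌊log₂(k)⌋. -/

import Mathlib

/-- The Smarandache primitive number `S₂(k)`: the least `n` such that `2^k` divides `n!`. -/
noncomputable def S2 (k : ℕ) : ℕ := sInf {n : ℕ | 2 ^ k ∣ Nat.factorial n}

lemma digit_sum_le_log (n : ℕ) : (Nat.digits 2 n).sum ≤ Nat.log 2 n + 1 := by
  rcases eq_or_ne n 0 with rfl | hn
  · simp
  have hlen : (Nat.digits 2 n).length = Nat.log 2 n + 1 := Nat.digits_len 2 n (by norm_num) hn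
  calc (Nat.digits 2 n).sum ≤ (Nat.digits 2 n).length * 1 := by
        apply List.sum_le_card_nsmul
        intro x hx
        have := Nat.digits_lt_base (by norm_num) hx
        omega
    _ = Nat.log 2 n + 1 := by omega

lemma digit_sum_le_of_lt (m : ℕ) : ∀ n, n < 2 ^ (m + 1) - 1 → (Nat.digits 2 n).sum ≤ m := by
  induction m with
  | zero =>
    intro n hn
    interval_cases n
    simp
  | succ m ih =>
    intro n hn
    rcases eq_or_ne n 0 with rfl | hn0
    · simp
    rw [Nat.digits_def' (by norm_num : 1 < 2) (Nat.pos_of_ne_zero hn0)]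
    rw [List.sum_cons]
    have hpow : 2 ^ (m + 2) = 2 * 2 ^ (m + 1) := by ring
    rcases Nat.mod_two_eq_zero_or_one n with h2 | h2
    · -- n even : n/2 < 2^(m+1)
      have hdiv : n / 2 < 2 ^ (m + 1) := by omega
      have hlog : Nat.log 2 (n / 2) + 1 ≤ m + 1 := by
        rcases eq_or_ne (n / 2) 0 with h0 | h0
        · simp [h0]
        · have := Nat.log_lt_of_lt_pow h0 hdiv
          omega
      have := digit_sum_le_log (n / 2)
      omega
    · -- n odd : n/2 < 2^(m+1) - 1
      have hdiv : n / 2 < 2 ^ (m + 1) - 1 := by omega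
      have := ih (n / 2) hdiv
      omega

theorem stmt_10 : ∀ k : ℕ, 1 ≤ k →
    S2 k ≤ k + Nat.log 2 (k + 1 + Nat.log 2 (k + 1)) ∧
    k + Nat.log 2 (k + 1 + Nat.log 2 (k + 1)) ≤ k + 1 + Nat.log 2 k := by
  intro k hk
  set L := Nat.log 2 (k + 1) with hL
  set m := Nat.log 2 (k + 1 + L) with hm
  have h2 : k + 1 < 2 ^ (L + 1) := Nat.lt_pow_succ_log_self (by norm_num) _
  have h3 : k + 1 + L < 2 ^ (m + 1) := Nat.lt_pow_succ_log_self (by norm_num) _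
  have h4 : L ≤ m := Nat.log_mono_right (by omega)
  have hL2 : L + 1 < 2 ^ (L + 1) := Nat.lt_two_pow_self
  have h5 : m ≤ L + 1 := by
    have hlt : k + 1 + L < 2 ^ (L + 2) := by
      have : 2 ^ (L + 2) = 2 ^ (L + 1) + 2 ^ (L + 1) := by ring
      omega
    have := Nat.log_lt_of_lt_pow (by omega : k + 1 + L ≠ 0) hlt
    omega
  -- key: k + m + 1 < 2 ^ (m + 1)
  have hkey : k + m + 1 < 2 ^ (m + 1) := by
    rcases (by omega : m = L ∨ m = L + 1) with h | h
    · omega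
    · rw [h]
      have : 2 ^ (L + 2) = 2 ^ (L + 1) + 2 ^ (L + 1) := by ring
      omega
  have hsum : (Nat.digits 2 (k + m)).sum ≤ m :=
    digit_sum_le_of_lt m (k + m) (by omega)
  have hdvd : 2 ^ k ∣ Nat.factorial (k + m) := by
    apply pow_dvd_of_le_multiplicity
    have hmul := Nat.Prime.sub_one_mul_multiplicity_factorial
      (n := k + m) Nat.prime_two
    have hds : (Nat.digits 2 (k + m)).sum ≤ k + m := Nat.digit_sum_le 2 (k + m)
    omega
  constructor
  · exact Nat.sInf_le hdvd
  · -- m ≤ 1 + log 2 k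
    set L' := Nat.log 2 k with hL'
    have hk2 : k < 2 ^ (L' + 1) := Nat.lt_pow_succ_log_self (by norm_num) _
    have hLL' : L ≤ L' + 1 := by
      have : L ≤ Nat.log 2 (2 ^ (L' + 1)) := Nat.log_mono_right (by omega)
      rwa [Nat.log_pow (by norm_num)] at this
    have hL'2 : L' + 1 < 2 ^ (L' + 1) := Nat.lt_two_pow_self
    have hlt : k + 1 + L < 2 ^ (L' + 2) := by
      have : 2 ^ (L' + 2) = 2 ^ (L' + 1) + 2 ^ (L' + 1) := by ring
      omega
    have := Nat.log_lt_of_lt_pow (by omega : k + 1 + L ≠ 0) hlt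
    omega
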